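/- Let V = B(0,1) ⊂ ℝ² be the open unit ball and let 𝓧(V) = {f ∈ H¹₀(V) : ∇f ∈ L^{2,1}(V)}. Then there is no modulus of continuity ω (i.e., no function ω : [0,∞) → [0,∞) with ω(s) → 0 as s → 0) and no constant C such that sup_{x≠y} |f(x) − f(y)| / ω(|x−y|) ≤ C‖∇f‖_{L^{2,1}(V)} holds for all f ∈ 𝓧(V); that is, 𝓧(V) does not embed into C^{0,ω}(V) for any modulus of continuity ω. -/

import Mathlib

open MeasureTheory Filter Metric Real Set
open scoped Topology ENNReal NNReal Classical ComplexConjugate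

noncomputable section

namespace GinzLan

/-! ### Basic differential-geometric quantities on `ℂ ≅ ℝ²` -/

/-- first partial derivative of a complex-valued map -/
def d1 (u : ℂ → ℂ) (x : ℂ) : ℂ := fderiv ℝ u x 1
/-- second partial derivative of a complex-valued map -/
def d2 (u : ℂ → ℂ) (x : ℂ) : ℂ := fderiv ℝ u x Complex.I
/-- first partial derivative of a real-valued map -/
def d1r (H : ℂ → ℝ) (x : ℂ) : ℝ := fderiv ℝ H x 1
/-- second partial derivative of a real-valued map -/
def d2r (H : ℂ → ℝ) (x : ℂ) : ℝ := fderiv ℝ H x Complex.I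

/-- first component of the covariant derivative `∇_A u = ∇u - iAu` -/
def covD1 (u A : ℂ → ℂ) (x : ℂ) : ℂ := d1 u x - Complex.I * ((A x).re : ℂ) * u x
/-- second component of the covariant derivative `∇_A u = ∇u - iAu` -/
def covD2 (u A : ℂ → ℂ) (x : ℂ) : ℂ := d2 u x - Complex.I * ((A x).im : ℂ) * u x
/-- `|∇_A u|²` -/
def covGradSq (u A : ℂ → ℂ) (x : ℂ) : ℝ := ‖covD1 u A x‖ ^ 2 + ‖covD2 u A x‖ ^ 2
/-- `|∇_A u|` -/
def covGradNorm (u A : ℂ → ℂ) (x : ℂ) : ℝ := Real.sqrt (covGradSq u A x)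

/-- `curl A = ∂₁A₂ - ∂₂A₁` for a plane vector field encoded as a `ℂ`-valued map -/
def curl (A : ℂ → ℂ) (x : ℂ) : ℝ := d1r (fun y => (A y).im) x - d2r (fun y => (A y).re) x

/-- real scalar product of two plane vectors encoded as complex numbers -/
def rdot (z w : ℂ) : ℝ := z.re * w.re + z.im * w.im

/-- the supercurrent `j = (iu, ∇_A u)`, encoded as a `ℂ`-valued map -/
def jcur (u A : ℂ → ℂ) (x : ℂ) : ℂ :=
  (((conj (u x) * covD1 u A x).im : ℝ) : ℂ) +
    (((conj (u x) * covD2 u A x).im : ℝ) : ℂ) * Complex.I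

/-- gradient of a real function, as a plane vector -/
def gradc (H : ℂ → ℝ) (x : ℂ) : ℂ := ((d1r H x : ℝ) : ℂ) + ((d2r H x : ℝ) : ℂ) * Complex.I
/-- rotated gradient `∇⊥H = (-∂₂H, ∂₁H)` -/
def perpGrad (H : ℂ → ℝ) (x : ℂ) : ℂ :=
  ((-(d2r H x) : ℝ) : ℂ) + ((d1r H x : ℝ) : ℂ) * Complex.I
/-- Laplacian of a real function -/
def lap (H : ℂ → ℝ) (x : ℂ) : ℝ := d1r (fun y => d1r H y) x + d2r (fun y => d2r H y) x

/-- gauge-invariant vorticity `μ(u,A) = curl (iu,∇_A u) + curl A` -/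
def vortFn (u A : ℂ → ℂ) (x : ℂ) : ℝ := curl (fun y => jcur u A y + A y) x

/-- the gradient of the phase `∇φ` where `u = ρ e^{iφ}`, i.e. `(iu,∇u)/|u|²` -/
def phGrad (u : ℂ → ℂ) (x : ℂ) : ℂ :=
  (((conj (u x) * d1 u x).im / ‖u x‖ ^ 2 : ℝ) : ℂ) +
    (((conj (u x) * d2 u x).im / ‖u x‖ ^ 2 : ℝ) : ℂ) * Complex.I

/-- `u/|u|` -/
def unitize (u : ℂ → ℂ) (x : ℂ) : ℂ := u x / ((‖u x‖ : ℝ) : ℂ)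

/-! ### Energies -/

/-- the free Ginzburg–Landau energy
`F_ε(u,A,V) = ½∫_V |∇_A u|² + |curl A|² + (1/(2ε²))(1-|u|²)²` -/
def Fen (ε : ℝ) (u A : ℂ → ℂ) (V : Set ℂ) : ℝ :=
  (1/2) * ∫ x in V,
    (covGradSq u A x + (curl A x) ^ 2 + (1/(2*ε^2)) * (1 - ‖u x‖^2)^2)

/-- the free energy of the modulus,
`F_ε(|u|,V) = ½∫_V |∇|u||² + (1/(2ε²))(1-|u|²)²` -/
def Fmod (ε : ℝ) (u : ℂ → ℂ) (V : Set ℂ) : ℝ :=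
  (1/2) * ∫ x in V,
    (‖fderiv ℝ (fun y => ‖u y‖) x‖^2 + (1/(2*ε^2)) * (1 - ‖u x‖^2)^2)

/-- the full Ginzburg–Landau energy with applied field `h_ex` -/
def Gen (ε hex : ℝ) (u A : ℂ → ℂ) (V : Set ℂ) : ℝ :=
  (1/2) * ∫ x in V,
    (covGradSq u A x + (curl A x - hex)^2 + (1/(2*ε^2)) * (1 - ‖u x‖^2)^2)

/-! ### Lorentz and Lorentz–Zygmund quantities -/

/-- the `L^{2,∞}` norm `‖f‖ = sup_{0<|E|<∞} |E|^{-1/2}∫_{E} |f|` of `f` on `V` -/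
def wL2 (f : ℂ → ℝ) (V : Set ℂ) : ℝ :=
  sSup ((fun E : Set ℂ =>
      ((volume E).toReal) ^ (-(1:ℝ)/2) * ∫ x in E ∩ V, |f x|) ''
    {E : Set ℂ | MeasurableSet E ∧ 0 < volume E ∧ volume E < ⊤})

/-- distribution function of `f` on `V` -/
def distF (f : ℂ → ℝ) (V : Set ℂ) (s : ℝ) : ℝ≥0∞ := volume {x ∈ V | s < |f x|}

/-- decreasing rearrangement of `f` on `V` -/
def rearr (f : ℂ → ℝ) (V : Set ℂ) (t : ℝ) : ℝ :=
  sInf {s : ℝ | 0 ≤ s ∧ distF f V s ≤ ENNReal.ofReal t}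

/-- the `L^{p,∞}` quasi-norm `sup_{t>0} t^{1/p} f*(t)` -/
def wLpNorm (p : ℝ) (f : ℂ → ℝ) (V : Set ℂ) : ℝ :=
  sSup ((fun t : ℝ => t ^ (1/p) * rearr f V t) '' Set.Ioi 0)

/-- the Lorentz–Zygmund quasi-norm `‖f‖_{L^{p,q}log^α L}`, `q < ∞` -/
def LZnorm (p q α : ℝ) (f : ℂ → ℝ) (V : Set ℂ) : ℝ :=
  (∫ t in Set.Ioi (0:ℝ),
    (t ^ (1/p) * Real.log (Real.exp 1 + 1/t) ^ α * rearr f V t) ^ q / t) ^ (1/q)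

/-- the Lorentz–Zygmund quasi-norm `‖f‖_{L^{p,∞}log^α L}` -/
def LZnormInf (p α : ℝ) (f : ℂ → ℝ) (V : Set ℂ) : ℝ :=
  sSup ((fun t : ℝ =>
    t ^ (1/p) * Real.log (Real.exp 1 + 1/t) ^ α * rearr f V t) '' Set.Ioi 0)

/-- membership in `L^{2,1}log^γ L(V)` (finiteness of the quasi-norm integral) -/
def memLZ21 (γ : ℝ) (f : ℂ → ℝ) (V : Set ℂ) : Prop :=
  IntegrableOn (fun t =>
    (t ^ ((1:ℝ)/2) * Real.log (Real.exp 1 + 1/t) ^ γ * rearr f V t) / t) (Set.Ioi 0)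

/-- the `L^{2,1}log^γ L(V)` norm -/
def L21norm (γ : ℝ) (f : ℂ → ℝ) (V : Set ℂ) : ℝ :=
  ∫ t in Set.Ioi (0:ℝ),
    (t ^ ((1:ℝ)/2) * Real.log (Real.exp 1 + 1/t) ^ γ * rearr f V t) / t

/-- membership in the space `𝓧_γ(V) = {f ∈ H¹₀(V) : ∇f ∈ L^{2,1}log^γ L(V)}` -/
def memX (γ : ℝ) (f : ℂ → ℝ) (V : Set ℂ) : Prop :=
  Differentiable ℝ f ∧ (∀ x ∉ V, f x = 0) ∧ memLZ21 γ (fun x => ‖gradc f x‖) V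

/-- the `𝓧*_γ(V)`-dual "distance": supremum of `|T f|` over the unit ball of `𝓧_{-γ}(V)` -/
def XdualDist (γ : ℝ) (V : Set ℂ) (T : (ℂ → ℝ) → ℝ) : ℝ :=
  sSup ((fun f : ℂ → ℝ => |T f|) ''
    {f | memX (-γ) f V ∧ L21norm (-γ) (fun x => ‖gradc f x‖) V ≤ 1})

/-! ### Degrees and vortex balls -/

/-- topological degree of `u` on the circle `∂B(a,r)`, computed as a winding integral -/
def deg (u : ℂ → ℂ) (a : ℂ) (r : ℝ) : ℝ :=
  (2*π)⁻¹ * ∫ t in (0:ℝ)..(2*π),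
    (conj (u (a + (r:ℂ) * Complex.exp ((t:ℂ) * Complex.I))) *
      fderiv ℝ u (a + (r:ℂ) * Complex.exp ((t:ℂ) * Complex.I))
        ((r:ℂ) * Complex.I * Complex.exp ((t:ℂ) * Complex.I))).im /
    ‖u (a + (r:ℂ) * Complex.exp ((t:ℂ) * Complex.I))‖^2

/-- degree (winding number) of `u` along a closed curve `γ : [0,1] → ℂ` -/
def degCurve (u : ℂ → ℂ) (γ : ℝ → ℂ) : ℝ :=
  (2*π)⁻¹ * ∫ t in (0:ℝ)..1,
    (conj (u (γ t)) * fderiv ℝ u (γ t) (deriv γ t)).im / ‖u (γ t)‖^2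

/-- the union of the closed balls in a finite collection -/
def ballSet (B : Finset (ℂ × ℝ)) : Set ℂ := ⋃ b ∈ B, closedBall b.1 b.2

/-- the collection consists of disjoint closed balls of positive radius -/
def disjBalls (B : Finset (ℂ × ℝ)) : Prop :=
  (∀ b ∈ B, 0 < b.2) ∧
  (↑B : Set (ℂ × ℝ)).Pairwise fun b b' =>
    Disjoint (closedBall b.1 b.2) (closedBall b'.1 b'.2)

/-- total radius -/
def radSum (B : Finset (ℂ × ℝ)) : ℝ := ∑ b ∈ B, b.2

/-- `Ω_ε = {x ∈ Ω : dist(x,∂Ω) > ε}` -/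
def innerSet (Ω : Set ℂ) (ε : ℝ) : Set ℂ := {x ∈ Ω | ε < infDist x Ωᶜ}

/-- `d_B = deg(u,∂B)` if `B ⊆ Ω` and `0` otherwise -/
def dB (u : ℂ → ℂ) (Ω : Set ℂ) (b : ℂ × ℝ) : ℝ :=
  if closedBall b.1 b.2 ⊆ Ω then deg u b.1 b.2 else 0

/-- total vorticity mass `n = Σ_{B ⊆ W} |d_B|` -/
def vmass (u : ℂ → ℂ) (Ω W : Set ℂ) (B : Finset (ℂ × ℝ)) : ℝ :=
  ∑ b ∈ B, if closedBall b.1 b.2 ⊆ W then |dB u Ω b| else 0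

/-- cut-off function `f(x) = 1` for `x ≤ 1`, `1/x` for `x > 1` -/
def fcut (s : ℝ) : ℝ := if s ≤ 1 then 1 else s⁻¹

/-- degree function `D(t) = Σ_{|b_i - p| ≤ t} d_i` -/
def Dfun (u : ℂ → ℂ) (Bals : Finset (ℂ × ℝ)) (bpt : (ℂ × ℝ) → ℂ) (p : ℂ) (t : ℝ) : ℝ :=
  ∑ b ∈ Bals, if ‖bpt b - p‖ ≤ t then deg u b.1 b.2 else 0

/-- the exceptional radii `T = {t ∈ (a,b) : ∂B(p,t) ∩ 𝓑 ≠ ∅}` -/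
def Tset (Bals : Finset (ℂ × ℝ)) (p : ℂ) (a b : ℝ) : Set ℝ :=
  {t | t ∈ Set.Ioo a b ∧ ∃ q ∈ Bals, (sphere p t ∩ closedBall q.1 q.2).Nonempty}

/-- annular vector field `Y(x) = D(|x-p|) τ(x) / |x-p|` off the exceptional set, `0` on it -/
def Yann (u : ℂ → ℂ) (Bals : Finset (ℂ × ℝ)) (bpt : (ℂ × ℝ) → ℂ) (p : ℂ) (a b : ℝ)
    (x : ℂ) : ℂ :=
  if ‖x - p‖ ∈ Tset Bals p a b then 0
  else (Dfun u Bals bpt p ‖x - p‖ / ‖x - p‖^2) • (Complex.I * (x - p))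

/-- `|c∇_A u - iuX|²` pointwise -/
def covDiffSq (u A : ℂ → ℂ) (c : ℝ) (X : ℂ → ℂ) (x : ℂ) : ℝ :=
  ‖c • covD1 u A x - Complex.I * (((X x).re : ℝ) : ℂ) * u x‖^2 +
  ‖c • covD2 u A x - Complex.I * (((X x).im : ℝ) : ℂ) * u x‖^2

/-- blow-up of a vector field at scale `t` around `p` -/
def blowupV (t : ℝ) (p : ℂ) (W : ℂ → ℂ) (x : ℂ) : ℂ := t • W (p + (t:ℂ) * x)

/-- blow-down of a vector field at scale `t` around `p` -/
def blowdownV (t : ℝ) (p : ℂ) (W : ℂ → ℂ) (x : ℂ) : ℂ := t⁻¹ • W ((x - p) / (t:ℂ))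

/-! ### The setting of Chapter 9 of Sandier–Serfaty (regimes 2 and 3) -/

/-- the filter `ε → 0⁺` -/
def lim0 : Filter ℝ := 𝓝[>] (0:ℝ)

/-- Data of a family of Ginzburg–Landau configurations together with the two-scale
vortex-ball construction. -/
structure Setting where
  Ω : Set ℂ
  ξ : ℂ → ℝ
  α : ℝ
  β : ℝ
  C : ℝ
  Cb : ℝ
  u : ℝ → ℂ → ℂ
  A : ℝ → ℂ → ℂ
  A' : ℝ → ℂ → ℂ
  hex : ℝ → ℝ
  B : ℝ → Finset (ℂ × ℝ)
  B' : ℝ → Finset (ℂ × ℝ)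
  n : ℝ → ℝ
  n' : ℝ → ℝ

/-- intervortex distance scale `ℓ = √(n/h_ex)` -/
def ell (S : Setting) (ε : ℝ) : ℝ := Real.sqrt (S.n ε / S.hex ε)

/-- `J₀ = ½‖ξ₀‖²_{H¹(Ω)}` -/
def J0 (S : Setting) : ℝ := (1/2) * ∫ x in S.Ω, (‖gradc S.ξ x‖^2 + (S.ξ x)^2)

/-- `f_ε(n) = h_ex²J₀ + πn|log ε| + 2πn h_ex ξ₀(p) + πn²S_Ω(p,p) + π(n²-n)log(1/ℓ)` -/
def feps (S : Setting) (p : ℂ) (Spp : ℝ) (ε : ℝ) : ℝ :=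
  (S.hex ε)^2 * J0 S + π * S.n ε * |Real.log ε| + 2*π*(S.n ε)*(S.hex ε)*(S.ξ p)
    + π*(S.n ε)^2*Spp + π*((S.n ε)^2 - S.n ε) * Real.log (1 / ell S ε)

/-- Hessian quadratic form `Q(x) = D²ξ(p)[x,x]` -/
def Qform (ξ : ℂ → ℝ) (p x : ℂ) : ℝ := fderiv ℝ (fun y => fderiv ℝ ξ y x) p x

/-- The structural hypotheses: regular bounded domain, `ξ₀` solving its PDE,
`A' = A - h_ex ∇⊥ξ₀`, the two-scale ball construction with final radius `1/√h_ex` and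
initial radius `C_b ε^{α/2}`, and hypothesis (H1). -/
structure Hyp (S : Setting) : Prop where
  openΩ : IsOpen S.Ω
  bddΩ : Bornology.IsBounded S.Ω
  xiC : ContDiffOn ℝ 2 S.ξ S.Ω
  xiPDE : ∀ x ∈ S.Ω, lap S.ξ x = S.ξ x + 1
  xiBd : ∀ x ∈ frontier S.Ω, S.ξ x = 0
  alphaMem : S.α ∈ Set.Ioo (2/3 : ℝ) 1
  betaMem : S.β ∈ Set.Ioo (0:ℝ) (3*S.α/2 - 1)
  Cpos : 0 < S.C
  Cbpos : 0 < S.Cb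
  reg : ∀ᶠ ε in lim0, ContDiffOn ℝ 1 (S.u ε) S.Ω ∧ ContDiffOn ℝ 1 (S.A ε) S.Ω
  A'def : ∀ ε x, S.A' ε x = S.A ε x - ((S.hex ε : ℝ) : ℂ) * perpGrad S.ξ x
  ballsB : ∀ᶠ ε in lim0, disjBalls (S.B ε) ∧ radSum (S.B ε) = 1 / Real.sqrt (S.hex ε) ∧
      (∀ b ∈ S.B ε, closedBall b.1 b.2 ⊆ S.Ω) ∧
      {x ∈ innerSet S.Ω ε | ε ^ (S.α/4) ≤ |‖S.u ε x‖ - 1|} ⊆ ballSet (S.B ε)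
  ballsB' : ∀ᶠ ε in lim0, disjBalls (S.B' ε) ∧ radSum (S.B' ε) = S.Cb * ε ^ (S.α/2) ∧
      (∀ b ∈ S.B' ε, closedBall b.1 b.2 ⊆ S.Ω) ∧
      ∀ b' ∈ S.B' ε, ∃ b ∈ S.B ε, closedBall b'.1 b'.2 ⊆ closedBall b.1 b.2
  ndef : ∀ ε, S.n ε = ∑ b ∈ S.B ε, |deg (S.u ε) b.1 b.2|
  n'def : ∀ ε, S.n' ε = ∑ b ∈ S.B' ε, |deg (S.u ε) b.1 b.2|
  H1 : ∀ᶠ ε in lim0, Fen ε (S.u ε) (S.A' ε) S.Ω ≤ ε ^ (S.α - 1) ∧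
      10 ≤ S.hex ε ∧ S.hex ε ≤ S.C * ε ^ (-S.β)

/-- `p` is the unique minimum point of `ξ₀`, with positive definite Hessian. -/
structure PMin (S : Setting) (p : ℂ) : Prop where
  mem : p ∈ S.Ω
  min : ∀ x ∈ S.Ω, x ≠ p → S.ξ p < S.ξ x
  posdef : ∀ x : ℂ, x ≠ 0 → 0 < Qform S.ξ p x

/-- `G_p` is the Green-type function `-ΔG_p + G_p = 2πδ_p`, `G_p = 0` on `∂Ω`, with
regular part tending to `S_Ω(p,p) = Spp` at `p`. -/
structure GpSet (S : Setting) (p : ℂ) (Gp : ℂ → ℝ) (Spp : ℝ) : Prop where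
  C1 : ContDiffOn ℝ 2 Gp (S.Ω \ {p})
  PDE : ∀ x ∈ S.Ω \ {p}, lap Gp x = Gp x
  bd : ∀ x ∈ frontier S.Ω, Gp x = 0
  SppLim : Tendsto (fun x => Gp x + Real.log ‖x - p‖) (𝓝[≠] p) (𝓝 Spp)

/-- (H2): `1 ≤ n ≪ h_ex` -/
def H2 (S : Setting) : Prop :=
  (∀ᶠ ε in lim0, 1 ≤ S.n ε) ∧ Tendsto (fun ε => S.n ε / S.hex ε) lim0 (𝓝 0)

/-- (H3): `h_ex ≤ C|log ε|` or `n' = n` -/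
def H3 (S : Setting) : Prop :=
  (∃ C₁ : ℝ, ∀ᶠ ε in lim0, S.hex ε ≤ C₁ * |Real.log ε|) ∨ ∀ᶠ ε in lim0, S.n' ε = S.n ε

/-- (H4): `G_ε(u,A) ≤ f_ε(n) + C₀n²` -/
def H4 (S : Setting) (p : ℂ) (Spp C₀ : ℝ) : Prop :=
  0 ≤ C₀ ∧ ∀ᶠ ε in lim0,
    Gen ε (S.hex ε) (S.u ε) (S.A ε) S.Ω ≤ feps S p Spp ε + C₀ * (S.n ε)^2

/-- `1 ≪ n` -/
def nBig (S : Setting) : Prop := Tendsto S.n lim0 atTop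

/-- the blown-up vorticity `μ̃(x) = ℓ² χ_Ω(p+ℓx) μ(u,A)(p+ℓx)` (as a density) -/
def muBlow (S : Setting) (Af : ℝ → ℂ → ℂ) (p : ℂ) (ε : ℝ) (x : ℂ) : ℝ :=
  (ell S ε)^2 * Set.indicator S.Ω (fun _ => (1:ℝ)) (p + ((ell S ε : ℝ) : ℂ) * x) *
    vortFn (S.u ε) (Af ε) (p + ((ell S ε : ℝ) : ℂ) * x)

/-- `μ_*` is the weak-* limit of `μ̃(u_ε,A'_ε)/(2πn)` (tested on `C_c`), a probability
measure -/
def muStarLim (S : Setting) (p : ℂ) (μs : Measure ℂ) : Prop :=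
  IsProbabilityMeasure μs ∧
  ∀ φ : ℂ → ℝ, Continuous φ → HasCompactSupport φ →
    Tendsto (fun ε => (2*π*S.n ε)⁻¹ * ∫ x, φ x * muBlow S S.A' p ε x) lim0
      (𝓝 (∫ x, φ x ∂μs))

/-- the renormalized energy `I(μ) = -π∬log|x-y|dμdμ + π∫Q dμ` -/
def Iren (Q : ℂ → ℝ) (μ : Measure ℂ) : ℝ :=
  -π * ∫ x, (∫ y, Real.log ‖x - y‖ ∂μ) ∂μ + π * ∫ x, Q x ∂μ

/-- `U_*` solves `ΔU_* = 2πμ_*` in `B(0,K)`, `U_* = 0` on `∂B(0,K)` (weak form) -/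
def UstarOk (μs : Measure ℂ) (K : ℝ) (U : ℂ → ℝ) : Prop :=
  (∀ x ∈ sphere (0:ℂ) K, U x = 0) ∧
  ∀ φ : ℂ → ℝ, ContDiff ℝ 2 φ → HasCompactSupport φ → tsupport φ ⊆ ball (0:ℂ) K →
    ∫ x in ball (0:ℂ) K, U x * lap φ x = 2*π*∫ x, φ x ∂μs

/-- the piecewise vector field `X_ε`: `(1/n)Y` on the balls, `(1/n)Y_ann` on the annulus,
`f(|u|)·(blow-down of ∇⊥U_*)` near `p`, and `-f(|u|)∇⊥G_p` away from `p`. -/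
def Xfield (Ω : Set ℂ) (u Y : ℂ → ℂ) (Bals : Finset (ℂ × ℝ)) (bpt : (ℂ × ℝ) → ℂ)
    (p : ℂ) (Gp Ustar : ℂ → ℝ) (n t K δ : ℝ) (x : ℂ) : ℂ :=
  if x ∈ ballSet Bals then n⁻¹ • Y x
  else if x ∈ ball p δ \ closedBall p (K*t) then n⁻¹ • Yann u Bals bpt p (K*t) δ x
  else if x ∈ ball p (K*t) then fcut ‖u x‖ • blowdownV t p (perpGrad Ustar) x
  else if x ∈ Ω \ ball p δ then (-(fcut ‖u x‖)) • perpGrad Gp x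
  else 0



/-! ### Auxiliary material for Statement 19 -/

/-- profile function `t ↦ (max 0 t)²` -/
def g0 (t : ℝ) : ℝ := (max 0 t)^2

lemma g0_hasDerivAt (t : ℝ) : HasDerivAt g0 (2 * max 0 t) t := by
  rcases lt_trichotomy t 0 with h | rfl | h
  · have he : g0 =ᶠ[𝓝 t] fun _ => (0:ℝ) := by
      filter_upwards [gt_mem_nhds h] with s hs
      simp [g0, max_eq_left hs.le]
    have := (hasDerivAt_const t (0:ℝ)).congr_of_eventuallyEq he
    simpa [max_eq_left h.le] using this
  · rw [hasDerivAt_iff_isLittleO]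
    simp only [g0, sub_zero, max_self, smul_zero, mul_zero]
    rw [Asymptotics.isLittleO_iff]
    intro c hc
    filter_upwards [Metric.ball_mem_nhds (0:ℝ) hc] with s hs
    rw [Real.ball_eq_Ioo] at hs
    have h1 : |s| < c := by rw [abs_lt]; constructor <;> [linarith [hs.1]; linarith [hs.2]]
    have h2 : (max 0 s)^2 ≤ s^2 := by
      rcases le_or_gt s 0 with h' | h'
      · rw [max_eq_left h']; norm_num [sq_nonneg s]
      · simp [max_eq_right h'.le]
    have hb : ‖(max 0 s)^2 - (0:ℝ)^2‖ ≤ |s| * |s| := by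
      rw [show ((0:ℝ))^2 = 0 by norm_num, sub_zero]
      calc ‖(max 0 s)^2‖ = (max 0 s)^2 := by
            rw [Real.norm_eq_abs, abs_of_nonneg (by positivity)]
        _ ≤ s^2 := h2
        _ = |s| * |s| := by rw [← abs_mul, sq, abs_of_nonneg (mul_self_nonneg s)]
    calc ‖(max 0 s)^2 - (0:ℝ)^2‖ ≤ |s| * |s| := hb
      _ ≤ c * ‖s‖ := by
          rw [Real.norm_eq_abs]
          exact mul_le_mul_of_nonneg_right h1.le (abs_nonneg s)
  · have he : g0 =ᶠ[𝓝 t] fun s => s^2 := by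
      filter_upwards [lt_mem_nhds h] with s hs
      simp [g0, max_eq_right hs.le]
    have hsq : HasDerivAt (fun s : ℝ => s^2) (2*t) t := by
      simpa using (hasDerivAt_pow 2 t)
    have := hsq.congr_of_eventuallyEq he
    simpa [max_eq_right h.le] using this

/-- the rescaled bump `f_r` -/
def fr (r : ℝ) (x : ℂ) : ℝ := g0 (1 - (x.re*x.re + x.im*x.im)/r^2)

/-- derivative of the quadratic part -/
def Dq (r : ℝ) (x : ℂ) : ℂ →L[ℝ] ℝ :=
  (-(2*x.re)/r^2) • Complex.reCLM + (-(2*x.im)/r^2) • Complex.imCLM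

lemma q_hasFDerivAt (r : ℝ) (x : ℂ) :
    HasFDerivAt (fun z : ℂ => 1 - (z.re*z.re + z.im*z.im)/r^2) (Dq r x) x := by
  have hre : HasFDerivAt (fun z : ℂ => z.re) Complex.reCLM x :=
    Complex.reCLM.hasFDerivAt
  have him : HasFDerivAt (fun z : ℂ => z.im) Complex.imCLM x :=
    Complex.imCLM.hasFDerivAt
  have h1 := ((hre.mul hre).add (him.mul him)).const_mul ((r^2)⁻¹)
  have h2 := (hasFDerivAt_const (1:ℝ) x).sub h1
  have h3 := h2.congr_of_eventuallyEq (Filter.Eventually.of_forall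
    (fun z : ℂ => by show 1 - (z.re*z.re + z.im*z.im)/r^2 = _; simp only [Pi.sub_apply, Pi.add_apply, Pi.mul_apply]; ring))
  refine h3.congr_fderiv ?_
  ext v
  simp [Dq]
  ring

lemma fr_hasFDerivAt (r : ℝ) (x : ℂ) :
    HasFDerivAt (fr r) ((2 * max 0 (1 - (x.re*x.re + x.im*x.im)/r^2)) • Dq r x) x :=
  (g0_hasDerivAt _).comp_hasFDerivAt x (q_hasFDerivAt r x)

lemma d1r_fr (r : ℝ) (x : ℂ) :
    fderiv ℝ (fr r) x 1 = 2 * max 0 (1 - (x.re*x.re + x.im*x.im)/r^2) * (-(2*x.re)/r^2) := by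
  rw [(fr_hasFDerivAt r x).fderiv]
  simp [Dq]

lemma d2r_fr (r : ℝ) (x : ℂ) :
    fderiv ℝ (fr r) x Complex.I
      = 2 * max 0 (1 - (x.re*x.re + x.im*x.im)/r^2) * (-(2*x.im)/r^2) := by
  rw [(fr_hasFDerivAt r x).fderiv]
  simp [Dq]

lemma re_im_sq (x : ℂ) : x.re*x.re + x.im*x.im = ‖x‖^2 := by
  rw [← Complex.normSq_eq_norm_sq, Complex.normSq_apply]

lemma fr_eq_zero {r : ℝ} {x : ℂ} (hle : 1 - (x.re*x.re + x.im*x.im)/r^2 ≤ 0) :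
    fr r x = 0 := by
  simp [fr, g0, max_eq_left hle]

lemma q_nonpos {r : ℝ} {x : ℂ} (hr0 : 0 < r) (hx : r < ‖x‖) :
    1 - (x.re*x.re + x.im*x.im)/r^2 ≤ 0 := by
  rw [re_im_sq]
  have hr2 : (0:ℝ) < r^2 := by positivity
  have hlt : r^2 < ‖x‖^2 := by nlinarith [norm_nonneg x]
  rw [sub_nonpos, le_div_iff₀ hr2]
  nlinarith

lemma gradc_fr_eq_zero {r : ℝ} {x : ℂ} (hr0 : 0 < r) (hx : r < ‖x‖) :
    gradc (fr r) x = 0 := by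
  rw [gradc, d1r, d2r, d1r_fr, d2r_fr, max_eq_left (q_nonpos hr0 hx)]
  simp

lemma norm_gradc_fr_le {r : ℝ} (hr0 : 0 < r) (x : ℂ) :
    ‖gradc (fr r) x‖ ≤ 8 / r := by
  by_cases hx : ‖x‖ ≤ r
  · set m := max 0 (1 - (x.re*x.re + x.im*x.im)/r^2) with hm
    have hm0 : 0 ≤ m := le_max_left _ _
    have hm1 : m ≤ 1 := by
      apply max_le zero_le_one
      have h1 : 0 ≤ (x.re*x.re + x.im*x.im)/r^2 :=
        div_nonneg (by nlinarith [mul_self_nonneg x.re, mul_self_nonneg x.im]) (by positivity)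
      linarith
    have hr2 : (0:ℝ) < r^2 := by positivity
    have key : ∀ c : ℝ, |c| ≤ r → |2 * m * (-(2*c)/r^2)| ≤ 4 / r := by
      intro c hc
      have h1 : |2 * m * (-(2*c)/r^2)| = 4*m*|c|/r^2 := by
        rw [abs_mul, abs_div, abs_neg, abs_mul, abs_mul, abs_two,
          abs_of_nonneg hm0, abs_of_nonneg hr2.le]
        ring
      rw [h1, div_le_div_iff₀ hr2 hr0]
      nlinarith [mul_le_mul hm1 hc (abs_nonneg c) zero_le_one, hr0.le, abs_nonneg c]
    have hre : |x.re| ≤ r := le_trans (by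
      exact le_trans (Complex.abs_re_le_norm x) le_rfl) hx
    have him : |x.im| ≤ r := le_trans (by
      exact le_trans (Complex.abs_im_le_norm x) le_rfl) hx
    calc ‖gradc (fr r) x‖
        ≤ ‖((2 * m * (-(2*x.re)/r^2) : ℝ) : ℂ)‖
          + ‖((2 * m * (-(2*x.im)/r^2) : ℝ) : ℂ) * Complex.I‖ := by
          rw [gradc, d1r, d2r, d1r_fr, d2r_fr, ← hm]
          exact norm_add_le _ _
      _ = |2 * m * (-(2*x.re)/r^2)| + |2 * m * (-(2*x.im)/r^2)| := by
          rw [norm_mul, Complex.norm_I, mul_one, Complex.norm_real, Complex.norm_real,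
            Real.norm_eq_abs, Real.norm_eq_abs]
      _ ≤ 4/r + 4/r := add_le_add (key _ hre) (key _ him)
      _ = 8/r := by ring
  · rw [gradc_fr_eq_zero hr0 (lt_of_not_ge hx)]
    simpa using div_nonneg (by norm_num : (0:ℝ) ≤ 8) hr0.le

set_option maxHeartbeats 1000000 in
lemma main_bounds {r : ℝ} (hr0 : 0 < r) (hr1 : r < 1) :
    memX 0 (fr r) (ball (0:ℂ) 1) ∧
    0 ≤ L21norm 0 (fun z => ‖gradc (fr r) z‖) (ball (0:ℂ) 1) ∧
    L21norm 0 (fun z => ‖gradc (fr r) z‖) (ball (0:ℂ) 1) ≤ 16 * Real.sqrt π := by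
  set V : Set ℂ := ball (0:ℂ) 1 with hV
  set g : ℂ → ℝ := fun z => ‖gradc (fr r) z‖ with hg
  have hrne : r ≠ 0 := ne_of_gt hr0
  have hr2 : (0:ℝ) < r^2 := by positivity
  have hgb : ∀ z, g z ≤ 8 / r := fun z => norm_gradc_fr_le hr0 z
  have hg0 : ∀ z, r < ‖z‖ → g z = 0 := by
    intro z hz
    rw [hg]
    simp only [gradc_fr_eq_zero hr0 hz, norm_zero]
  have habs : ∀ z, |g z| = g z := fun z => abs_of_nonneg (norm_nonneg _)
  have hd8 : distF g V (8/r) = 0 := by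
    have hempty : {x ∈ V | 8/r < |g x|} = ∅ :=
      eq_empty_iff_forall_notMem.mpr
        (fun z hz => (not_lt.mpr (le_trans (le_of_eq (habs z)) (hgb z))) hz.2)
    rw [distF, hempty, measure_empty]
  have hd0 : distF g V 0 ≤ ENNReal.ofReal (π * r^2) := by
    have hsub : {x ∈ V | 0 < |g x|} ⊆ closedBall (0:ℂ) r := by
      intro z hz
      rw [mem_closedBall, dist_zero_right]
      by_contra h
      push_neg at h
      have := hz.2
      rw [habs z] at this
      exact absurd (hg0 z h) (ne_of_gt this)
    calc distF g V 0 ≤ volume (closedBall (0:ℂ) r) := measure_mono hsub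
      _ = ENNReal.ofReal (π * r^2) := by
          rw [Complex.volume_closedBall,
            show (π * r^2 : ℝ) = r^2 * π by ring,
            ENNReal.ofReal_mul (by positivity : (0:ℝ) ≤ r^2),
            ENNReal.ofReal_pow hr0.le, ← NNReal.coe_real_pi, ENNReal.ofReal_coe_nnreal]
  have hset : ∀ t : ℝ, (8/r) ∈ {s : ℝ | 0 ≤ s ∧ distF g V s ≤ ENNReal.ofReal t} := by
    intro t
    exact ⟨div_nonneg (by norm_num) hr0.le, by rw [hd8]; exact zero_le'⟩
  have hbdd : ∀ t : ℝ, BddBelow {s : ℝ | 0 ≤ s ∧ distF g V s ≤ ENNReal.ofReal t} :=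
    fun t => ⟨0, fun s hs => hs.1⟩
  have hrle : ∀ t : ℝ, rearr g V t ≤ 8/r := fun t => csInf_le (hbdd t) (hset t)
  have hrnn : ∀ t : ℝ, 0 ≤ rearr g V t := fun t => Real.sInf_nonneg (fun s hs => hs.1)
  have hrzero : ∀ t : ℝ, π * r^2 ≤ t → rearr g V t = 0 := by
    intro t ht
    refine le_antisymm (csInf_le (hbdd t) ⟨le_rfl, ?_⟩) (hrnn t)
    exact le_trans hd0 (ENNReal.ofReal_le_ofReal ht)
  have hanti : Antitone (rearr g V) := by
    intro t₁ t₂ h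
    exact csInf_le_csInf (hbdd t₂) ⟨8/r, hset t₁⟩
      (fun s hs => ⟨hs.1, hs.2.trans (ENNReal.ofReal_le_ofReal h)⟩)
  have hmeas : Measurable fun t : ℝ => (t ^ ((1:ℝ)/2) * rearr g V t) / t :=
    Measurable.div (Measurable.mul (measurable_id.pow_const ((1:ℝ)/2)) hanti.measurable) measurable_id
  set a : ℝ := π * r^2 with ha
  have ha0 : (0:ℝ) < a := by positivity
  have hψint : IntegrableOn (fun t : ℝ => (8/r) * t ^ (-(1/2) : ℝ)) (Ioc 0 a) := by
    have h : IntervalIntegrable (fun x : ℝ => x ^ (-(1/2):ℝ)) volume 0 a :=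
      intervalIntegral.intervalIntegrable_rpow' (by norm_num)
    have h2 := h.const_mul (8/r)
    rw [intervalIntegrable_iff, uIoc_of_le ha0.le] at h2
    exact h2
  have hψind : Integrable ((Ioc (0:ℝ) a).indicator (fun t => (8/r) * t ^ (-(1/2):ℝ)))
      (volume.restrict (Ioi 0)) :=
    (hψint.integrable_indicator measurableSet_Ioc).integrableOn
  have hbound : ∀ t ∈ Ioi (0:ℝ), ‖(t ^ ((1:ℝ)/2) * rearr g V t) / t‖
      ≤ (Ioc (0:ℝ) a).indicator (fun t => (8/r) * t ^ (-(1/2):ℝ)) t := by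
    intro t ht
    have ht0 : (0:ℝ) < t := ht
    have hnn : 0 ≤ (t ^ ((1:ℝ)/2) * rearr g V t) / t :=
      div_nonneg (mul_nonneg (Real.rpow_nonneg ht0.le _) (hrnn t)) ht0.le
    rw [Real.norm_eq_abs, abs_of_nonneg hnn]
    by_cases hta : t ≤ a
    · rw [Set.indicator_of_mem (show t ∈ Ioc (0:ℝ) a from ⟨ht0, hta⟩)]
      have key : t ^ ((1:ℝ)/2) / t = t ^ (-(1/2):ℝ) := by
        rw [show (-(1/2):ℝ) = 1/2 - 1 by norm_num, Real.rpow_sub ht0, Real.rpow_one]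
      calc (t ^ ((1:ℝ)/2) * rearr g V t) / t = t ^ ((1:ℝ)/2) / t * rearr g V t := by ring
        _ = t ^ (-(1/2):ℝ) * rearr g V t := by rw [key]
        _ ≤ t ^ (-(1/2):ℝ) * (8/r) :=
            mul_le_mul_of_nonneg_left (hrle t) (Real.rpow_nonneg ht0.le _)
        _ = 8/r * t ^ (-(1/2):ℝ) := by ring
    · rw [Set.indicator_of_notMem (fun hmem => hta hmem.2)]
      rw [hrzero t (le_of_not_ge hta), mul_zero, zero_div]
  have hφint : IntegrableOn (fun t : ℝ => (t ^ ((1:ℝ)/2) * rearr g V t) / t) (Ioi 0) := by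
    refine Integrable.mono' hψind hmeas.aestronglyMeasurable ?_
    rw [ae_restrict_iff' measurableSet_Ioi]
    exact Filter.Eventually.of_forall hbound
  have hmem21 : memLZ21 0 g V := by
    have heq : (fun t : ℝ =>
        (t ^ ((1:ℝ)/2) * Real.log (Real.exp 1 + 1/t) ^ (0:ℝ) * rearr g V t) / t)
        = fun t : ℝ => (t ^ ((1:ℝ)/2) * rearr g V t) / t := by
      funext t
      rw [Real.rpow_zero, mul_one]
    unfold memLZ21
    rw [heq]
    exact hφint
  have hLnn : 0 ≤ L21norm 0 g V := by
    simp only [L21norm, Real.rpow_zero, mul_one]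
    apply setIntegral_nonneg measurableSet_Ioi
    intro t ht
    exact div_nonneg (mul_nonneg (Real.rpow_nonneg (le_of_lt ht) _) (hrnn t)) (le_of_lt ht)
  have hL : L21norm 0 g V ≤ 16 * Real.sqrt π := by
    have step1 : ∫ t in Ioi (0:ℝ), (t ^ ((1:ℝ)/2) * rearr g V t) / t
        ≤ ∫ t in Ioi (0:ℝ),
            (Ioc (0:ℝ) a).indicator (fun t => (8/r) * t ^ (-(1/2):ℝ)) t := by
      refine integral_mono_ae hφint hψind ?_
      rw [Filter.EventuallyLE, ae_restrict_iff' measurableSet_Ioi]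
      refine Filter.Eventually.of_forall (fun t ht => ?_)
      exact le_trans (le_abs_self _) ((Real.norm_eq_abs _) ▸ hbound t ht)
    have step2 : ∫ t in Ioi (0:ℝ),
        (Ioc (0:ℝ) a).indicator (fun t => (8/r) * t ^ (-(1/2):ℝ)) t
        = 16 * Real.sqrt π := by
      rw [setIntegral_indicator measurableSet_Ioc,
        Set.inter_eq_self_of_subset_right Ioc_subset_Ioi_self,
        ← intervalIntegral.integral_of_le ha0.le,
        intervalIntegral.integral_const_mul,
        integral_rpow (Or.inl (by norm_num : (-1:ℝ) < -(1/2))),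
        show (-(1/2)+1 : ℝ) = 1/2 by norm_num,
        Real.zero_rpow (by norm_num : (1/2:ℝ) ≠ 0),
        show ((1:ℝ)/2 : ℝ) = 1/(2:ℝ) by norm_num,
        ← Real.sqrt_eq_rpow, ha,
        Real.sqrt_mul (le_of_lt Real.pi_pos), Real.sqrt_sq hr0.le]
      field_simp
      ring
    have heq : L21norm 0 g V = ∫ t in Ioi (0:ℝ), (t ^ ((1:ℝ)/2) * rearr g V t) / t := by
      simp only [L21norm, Real.rpow_zero, mul_one]
    rw [heq]
    exact le_trans step1 (le_of_eq step2)
  refine ⟨⟨fun x => (fr_hasFDerivAt r x).differentiableAt, ?_, hmem21⟩, hLnn, hL⟩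
  intro x hx
  have hxnorm : 1 ≤ ‖x‖ := not_lt.mp (fun h => hx (mem_ball_zero_iff.mpr h))
  exact fr_eq_zero (q_nonpos hr0 (lt_of_lt_of_le hr1 hxnorm))

/-- no modulus-of-continuity embedding for `𝓧(B(0,1))`.  There is no
modulus of continuity `ω` (i.e. `ω : [0,∞) → [0,∞)` with `ω(s) → 0` as `s → 0⁺`) and no
constant `C` such that every `f ∈ 𝓧(B(0,1)) = {f ∈ H¹₀ : ∇f ∈ L^{2,1}}` satisfies
`|f(x) - f(y)| ≤ C ‖∇f‖_{L^{2,1}(B(0,1))} ω(|x-y|)` for all `x ≠ y`. -/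
theorem no_modulus_embedding :
    ¬ ∃ (ω : ℝ → ℝ) (C : ℝ),
        (∀ s, 0 ≤ ω s) ∧ Tendsto ω (𝓝[>] (0:ℝ)) (𝓝 0) ∧
        ∀ f : ℂ → ℝ, memX 0 f (ball (0:ℂ) 1) →
          ∀ x y : ℂ, x ≠ y →
            |f x - f y| ≤
              C * L21norm 0 (fun z => ‖gradc f z‖) (ball (0:ℂ) 1) * ω (dist x y) := by
  rintro ⟨ω, C, hω0, hωlim, hemb⟩
  have hev1 : ∀ᶠ r in 𝓝[>] (0:ℝ), |C| * (16 * Real.sqrt π) * ω r < 1 := by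
    have h := hωlim.const_mul (|C| * (16 * Real.sqrt π))
    rw [mul_zero] at h
    exact h.eventually_lt_const one_pos
  have hev2 : ∀ᶠ r in 𝓝[>] (0:ℝ), r < 1 :=
    eventually_nhdsWithin_of_eventually_nhds (gt_mem_nhds one_pos)
  have hev3 : ∀ᶠ r in 𝓝[>] (0:ℝ), 0 < r := eventually_mem_nhdsWithin
  obtain ⟨r, h1, hr1, hr0⟩ := (hev1.and (hev2.and hev3)).exists
  obtain ⟨hmemX, hLnn, hL⟩ := main_bounds hr0 hr1
  have hne : (0:ℂ) ≠ ((r:ℝ):ℂ) := by exact_mod_cast hr0.ne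
  have h := hemb (fr r) hmemX 0 ((r:ℝ):ℂ) hne
  have hdist : dist (0:ℂ) ((r:ℝ):ℂ) = r := by
    rw [dist_zero_left, Complex.norm_real, Real.norm_eq_abs, abs_of_pos hr0]
  have hf0 : fr r 0 = 1 := by
    simp [fr, g0]
  have hfr : fr r ((r:ℝ):ℂ) = 0 := by
    have hq : 1 - (((r:ℝ):ℂ).re * ((r:ℝ):ℂ).re + ((r:ℝ):ℂ).im * ((r:ℝ):ℂ).im)/r^2 ≤ 0 := by
      simp only [Complex.ofReal_re, Complex.ofReal_im, mul_zero, add_zero]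
      rw [show r * r = r^2 by ring, div_self (by positivity : r^2 ≠ 0)]
      norm_num
    exact fr_eq_zero hq
  rw [hf0, hfr, hdist, sub_zero, abs_one] at h
  set L := L21norm 0 (fun z => ‖gradc (fr r) z‖) (ball (0:ℂ) 1) with hLdef
  have hchain : C * L * ω r ≤ |C| * (16 * Real.sqrt π) * ω r := by
    apply mul_le_mul_of_nonneg_right _ (hω0 r)
    calc C * L ≤ |C| * L := mul_le_mul_of_nonneg_right (le_abs_self C) hLnn
      _ ≤ |C| * (16 * Real.sqrt π) := mul_le_mul_of_nonneg_left hL (abs_nonneg C)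
  linarith [h, hchain, h1]
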